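/- Fix an integer K ≥ 2. For any probability vector p ∈ Δ({1,...,K}) with all p_k > 0 and any q ∈ Δ({1,...,K−1}) with all q_k > 0, we have min_{k=1,...,K−1} (p_k p_{k+1}/(p_k + p_{k+1})) q_k² < 1/(2(K−1)³). -/

import Mathlib

set_option maxHeartbeats 1000000


theorem maxmin_step4 (K : ℕ) (hK : 2 ≤ K)
    (p : Fin K → ℝ) (hp : ∀ k, 0 < p k) (hps : ∑ k, p k = 1)
    (q : Fin (K - 1) → ℝ) (hq : ∀ k, 0 < q k) (hqs : ∑ k, q k = 1) :
    ∃ k : Fin (K - 1),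
      (p ⟨k.1, by have := k.isLt; omega⟩ * p ⟨k.1 + 1, by have := k.isLt; omega⟩
          / (p ⟨k.1, by have := k.isLt; omega⟩ + p ⟨k.1 + 1, by have := k.isLt; omega⟩))
        * q k ^ 2
      < 1 / (2 * ((K : ℝ) - 1) ^ 3) := by
  by_contra hcon
  push_neg at hcon
  obtain ⟨N, rfl⟩ : ∃ N, K = N + 1 := ⟨K - 1, by omega⟩
  have hN : 1 ≤ N := by omega
  set n : ℝ := (N : ℝ) with hn_def
  have hn : (0 : ℝ) < n := by
    simp only [hn_def]; exact_mod_cast Nat.lt_of_lt_of_le Nat.zero_lt_one hN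
  have hcast : ((N + 1 : ℕ) : ℝ) - 1 = n := by push_cast; ring
  -- reinterpret q as function on Fin N (defeq)
  have hq' : ∀ k : Fin N, 0 < q k := hq
  have hqs' : ∑ k : Fin N, q k = 1 := hqs
  -- key pointwise bound: s k ≥ 4c / q k ^ 2
  have key : ∀ k : Fin N, 4 * (1 / (2 * n ^ 3)) / q k ^ 2 ≤ p k.castSucc + p k.succ := by
    intro k
    have h1 := hcon ⟨k.1, by have := k.isLt; omega⟩
    rw [hcast] at h1
    have hp1 : 0 < p k.castSucc := hp _
    have hp2 : 0 < p k.succ := hp _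
    have hqk : 0 < q k := hq' k
    have hmk1 : (⟨k.1, by have := k.isLt; omega⟩ : Fin (N + 1)) = k.castSucc := rfl
    have hmk2 : (⟨k.1 + 1, by have := k.isLt; omega⟩ : Fin (N + 1)) = k.succ := rfl
    rw [hmk1, hmk2] at h1
    -- harmonic mean bound: p1*p2/(p1+p2) ≤ (p1+p2)/4
    have hsum : 0 < p k.castSucc + p k.succ := by linarith
    have hhm : p k.castSucc * p k.succ / (p k.castSucc + p k.succ)
        ≤ (p k.castSucc + p k.succ) / 4 := by
      rw [div_le_div_iff₀ hsum (by norm_num)]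
      nlinarith [sq_nonneg (p k.castSucc - p k.succ)]
    have h2 : 1 / (2 * n ^ 3) ≤ (p k.castSucc + p k.succ) / 4 * q k ^ 2 := by
      calc 1 / (2 * n ^ 3) ≤ _ := h1
        _ ≤ (p k.castSucc + p k.succ) / 4 * q k ^ 2 := by
          apply mul_le_mul_of_nonneg_right hhm (sq_nonneg _)
    rw [div_le_iff₀ (by positivity)]
    nlinarith
  -- Cauchy–Schwarz 1 : n^2 ≤ ∑ 1/q
  have hQ1 : n ^ 2 ≤ ∑ k : Fin N, 1 / q k := by
    have := Finset.sum_mul_sq_le_sq_mul_sq Finset.univ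
      (fun k : Fin N => Real.sqrt (q k)) (fun k => 1 / Real.sqrt (q k))
    have e1 : ∑ k : Fin N, Real.sqrt (q k) * (1 / Real.sqrt (q k)) = n := by
      have he : ∀ k : Fin N, Real.sqrt (q k) * (1 / Real.sqrt (q k)) = 1 := by
        intro k
        have hne : Real.sqrt (q k) ≠ 0 := ne_of_gt (Real.sqrt_pos.mpr (hq' k))
        field_simp
      calc ∑ k : Fin N, Real.sqrt (q k) * (1 / Real.sqrt (q k)) = ∑ _k : Fin N, (1:ℝ) :=
            Finset.sum_congr rfl fun k _ => he k
        _ = n := by simp [hn_def]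
    have e2 : ∑ k : Fin N, Real.sqrt (q k) ^ 2 = 1 := by
      rw [Finset.sum_congr rfl fun k _ => Real.sq_sqrt (hq' k).le, hqs']
    have e3 : ∑ k : Fin N, (1 / Real.sqrt (q k)) ^ 2 = ∑ k : Fin N, 1 / q k := by
      apply Finset.sum_congr rfl
      intro k _
      rw [div_pow, one_pow, Real.sq_sqrt (hq' k).le]
    rw [e1, e2, e3, one_mul] at this
    exact this
  -- Cauchy–Schwarz 2 : (∑ 1/q)^2 ≤ n * ∑ 1/q^2
  have hQ2 : (∑ k : Fin N, 1 / q k) ^ 2 ≤ n * ∑ k : Fin N, 1 / q k ^ 2 := by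
    have := Finset.sum_mul_sq_le_sq_mul_sq Finset.univ
      (fun _ : Fin N => (1 : ℝ)) (fun k => 1 / q k)
    simpa [hn_def, div_pow, Finset.card_univ] using this
  have hQ1pos : 0 < ∑ k : Fin N, 1 / q k := by
    have : Nonempty (Fin N) := ⟨⟨0, by omega⟩⟩
    exact Finset.sum_pos (fun k _ => one_div_pos.mpr (hq' k)) Finset.univ_nonempty
  have hQ2' : n ^ 3 ≤ ∑ k : Fin N, 1 / q k ^ 2 := by
    have h4 : n ^ 4 ≤ (∑ k : Fin N, 1 / q k) ^ 2 := by
      calc n ^ 4 = (n ^ 2) ^ 2 := by ring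
        _ ≤ _ := pow_le_pow_left₀ (by positivity) hQ1 2
    have := le_trans h4 hQ2
    have hfin : n ^ 4 / n ≤ ∑ k : Fin N, 1 / q k ^ 2 := by
      rw [div_le_iff₀ hn]
      linarith [this]
    calc n ^ 3 = n ^ 4 / n := by field_simp
      _ ≤ _ := hfin
  -- sum the key bound
  have hSge : 2 ≤ ∑ k : Fin N, (p k.castSucc + p k.succ) := by
    have step : ∑ k : Fin N, 4 * (1 / (2 * n ^ 3)) / q k ^ 2
        ≤ ∑ k : Fin N, (p k.castSucc + p k.succ) :=
      Finset.sum_le_sum fun k _ => key k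
    have lhs_eq : ∑ k : Fin N, 4 * (1 / (2 * n ^ 3)) / q k ^ 2
        = (2 / n ^ 3) * ∑ k : Fin N, 1 / q k ^ 2 := by
      rw [Finset.mul_sum]
      apply Finset.sum_congr rfl
      intro k _
      field_simp
      ring
    have : (2 : ℝ) ≤ (2 / n ^ 3) * ∑ k : Fin N, 1 / q k ^ 2 := by
      have := mul_le_mul_of_nonneg_left hQ2' (le_of_lt (by positivity : (0:ℝ) < 2 / n ^ 3))
      calc (2:ℝ) = (2 / n ^ 3) * n ^ 3 := by field_simp
        _ ≤ _ := this
    linarith [step, lhs_eq ▸ this]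
  -- but the sum is < 2
  have hSlt : ∑ k : Fin N, (p k.castSucc + p k.succ) < 2 := by
    rw [Finset.sum_add_distrib]
    have e1 : ∑ k : Fin N, p k.castSucc = 1 - p (Fin.last N) := by
      have := Fin.sum_univ_castSucc p
      rw [hps] at this
      linarith
    have e2 : ∑ k : Fin N, p k.succ = 1 - p 0 := by
      have := Fin.sum_univ_succ p
      rw [hps] at this
      linarith
    rw [e1, e2]
    have := hp (Fin.last N)
    have := hp (0 : Fin (N + 1))
    linarith
  linarith
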